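/- arXiv:2010.03716 — 2 statements merged into one kernel-verified Lean document; each statement's English description precedes it below -/
import Mathlib

section
/- Let G be a simple connected positively curved (in the Lin–Lu–Yau sense) planar graph, and let xy be an edge with deg(x) ≥ deg(y). Suppose S ⊆ Γ(y)∖{x} with |S| = s and |S ∩ Γ(x)| = k. Then |Γ(S) ∩ Γ(x)| > (s/deg(y))·deg(x) − (k + 1 + |Γ(x,y)|) + |Γ(S) ∩ Γ(x,y)|. -/
open Filter Set

variable {V : Type*}

-- The `α`-lazy random walk distribution at vertex `x`.
open Classical in
noncomputable def lazyWalk (G : SimpleGraph V) [G.LocallyFinite] (α : ℝ) (x : V) : V → ℝ :=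
  fun v => if v = x then α else if G.Adj x v then (1 - α) / (G.degree x : ℝ) else 0

/-- `A` is a coupling between the finitely supported distributions `m₁` and `m₂`. -/
def IsCoupling (m₁ m₂ : V → ℝ) (A : V → V → ℝ) : Prop :=
  (Function.support fun p : V × V => A p.1 p.2).Finite ∧
  (∀ x y, 0 ≤ A x y ∧ A x y ≤ 1) ∧
  (∀ x, ∑ᶠ y, A x y = m₁ x) ∧
  (∀ y, ∑ᶠ x, A x y = m₂ y)

/-- The transportation (Wasserstein) distance between two distributions on `V`,
with respect to the graph distance of `G`. -/
noncomputable def transportDist (G : SimpleGraph V) (m₁ m₂ : V → ℝ) : ℝ :=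
  sInf {w : ℝ | ∃ A : V → V → ℝ, IsCoupling m₁ m₂ A ∧
    w = ∑ᶠ p : V × V, A p.1 p.2 * (G.dist p.1 p.2 : ℝ)}

/-- The `α`-Ricci curvature `κ_α(x,y)`. -/
noncomputable def alphaRicci (G : SimpleGraph V) [G.LocallyFinite] (α : ℝ) (x y : V) : ℝ :=
  1 - transportDist G (lazyWalk G α x) (lazyWalk G α y) / (G.dist x y : ℝ)

/-- `κ` is the Lin–Lu–Yau Ricci curvature of the pair `(x,y)`:
the limit of `κ_α(x,y)/(1-α)` as `α → 1⁻`. -/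
def HasLLYCurv (G : SimpleGraph V) [G.LocallyFinite] (x y : V) (κ : ℝ) : Prop :=
  Tendsto (fun α : ℝ => alphaRicci G α x y / (1 - α)) (nhdsWithin 1 (Set.Iio 1)) (nhds κ)

/-- `G` is positively curved: every edge has positive Lin–Lu–Yau Ricci curvature. -/
def PositivelyCurved (G : SimpleGraph V) [G.LocallyFinite] : Prop :=
  ∀ ⦃x y : V⦄, G.Adj x y → ∃ κ : ℝ, 0 < κ ∧ HasLLYCurv G x y κ

/-- `G` is planar: it admits a topological embedding in the plane, i.e. an injective
placement of the vertices together with arcs for the edges, where arcs are injective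
continuous curves joining the endpoints, not passing through any other vertex, and
two arcs of distinct edges meet only in common endpoints. -/
def IsPlanar (G : SimpleGraph V) : Prop :=
  ∃ (f : V → ℝ × ℝ) (e : ∀ u v : V, G.Adj u v → Set.Icc (0:ℝ) 1 → ℝ × ℝ),
    Function.Injective f ∧
    (∀ u v (h : G.Adj u v), Continuous (e u v h)) ∧
    (∀ u v (h : G.Adj u v), Function.Injective (e u v h)) ∧
    (∀ u v (h : G.Adj u v),
      e u v h ⟨0, Set.left_mem_Icc.mpr zero_le_one⟩ = f u ∧
      e u v h ⟨1, Set.right_mem_Icc.mpr zero_le_one⟩ = f v) ∧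
    (∀ u v (h : G.Adj u v) (w : V), w ≠ u → w ≠ v → f w ∉ Set.range (e u v h)) ∧
    (∀ u v (h : G.Adj u v) (u' v' : V) (h' : G.Adj u' v'), ({u, v} : Set V) ≠ {u', v'} →
      Set.range (e u v h) ∩ Set.range (e u' v' h') ⊆ (f '' {u, v}) ∩ (f '' {u', v'}))

/-- The neighborhood `Γ(S)` of a set of vertices `S`. -/
def setNbhd (G : SimpleGraph V) (S : Set V) : Set V := {u : V | ∃ w ∈ S, G.Adj w u}

section AuxLemmas

variable {G : SimpleGraph V} [G.LocallyFinite]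

lemma lazyWalk_self (α : ℝ) (z : V) : lazyWalk G α z z = α := by
  simp [lazyWalk]

lemma lazyWalk_adj {z v : V} (α : ℝ) (h : G.Adj z v) :
    lazyWalk G α z v = (1 - α) / (G.degree z : ℝ) := by
  simp [lazyWalk, h, h.ne']

lemma lazyWalk_eq_zero {z v : V} (α : ℝ) (h1 : v ≠ z) (h2 : ¬ G.Adj z v) :
    lazyWalk G α z v = 0 := by simp [lazyWalk, h1, h2]

lemma lazyWalk_support (α : ℝ) (z : V) :
    Function.support (lazyWalk G α z) ⊆ insert z (G.neighborSet z) := by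
  intro v hv
  simp only [Function.mem_support] at hv
  simp only [Set.mem_insert_iff, SimpleGraph.mem_neighborSet]
  by_contra h
  push_neg at h
  exact hv (lazyWalk_eq_zero α h.1 h.2)

lemma finsum_mul_lazyWalk (α : ℝ) (z : V) (f : V → ℝ) :
    ∑ᶠ u, f u * lazyWalk G α z u
      = α * f z + (∑ v ∈ G.neighborFinset z, f v) * ((1 - α) / (G.degree z : ℝ)) := by
  classical
  have hsub : (Function.support fun u => f u * lazyWalk G α z u)
      ⊆ ↑(insert z (G.neighborFinset z)) := by
    intro v hv
    have hv2 : v ∈ Function.support (lazyWalk G α z) := by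
      simp only [Function.mem_support] at hv ⊢
      exact right_ne_zero_of_mul hv
    have := lazyWalk_support α z hv2
    simpa using this
  rw [finsum_eq_sum_of_support_subset _ hsub, Finset.sum_insert (by simp)]
  have h1 : ∑ v ∈ G.neighborFinset z, f v * lazyWalk G α z v
      = ∑ v ∈ G.neighborFinset z, f v * ((1 - α) / (G.degree z : ℝ)) := by
    apply Finset.sum_congr rfl
    intro v hv
    rw [lazyWalk_adj α (by simpa using hv)]
  rw [h1, lazyWalk_self, ← Finset.sum_mul, mul_comm (f z) α]

lemma finsum_lazyWalk (α : ℝ) {z : V} (hz : 0 < G.degree z) :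
    ∑ᶠ u, lazyWalk G α z u = 1 := by
  have h := finsum_mul_lazyWalk (G := G) α z (fun _ => 1)
  simp only [one_mul] at h
  rw [h, Finset.sum_const, nsmul_eq_mul, mul_one,
    SimpleGraph.card_neighborFinset_eq_degree]
  have hd : ((G.degree z : ℝ)) ≠ 0 := by
    exact_mod_cast hz.ne'
  field_simp
  ring

lemma isCoupling_prod (α : ℝ) (x y : V) (hα0 : 0 ≤ α) (hα1 : α ≤ 1)
    (hx : 0 < G.degree x) (hy : 0 < G.degree y) :
    IsCoupling (lazyWalk G α x) (lazyWalk G α y)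
      (fun u v => lazyWalk G α x u * lazyWalk G α y v) := by
  have hb : ∀ z : V, ∀ v : V, 0 ≤ lazyWalk G α z v ∧ lazyWalk G α z v ≤ 1 := by
    intro z v
    rcases eq_or_ne v z with rfl | hne
    · rw [lazyWalk_self]; exact ⟨hα0, hα1⟩
    by_cases hadj : G.Adj z v
    · rw [lazyWalk_adj α hadj]
      have hz : 0 < G.degree z := (G.degree_pos_iff_exists_adj z).mpr ⟨v, hadj⟩
      have hd1 : (1:ℝ) ≤ (G.degree z : ℝ) := by exact_mod_cast hz
      constructor
      · apply div_nonneg (by linarith) (by linarith)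
      · rw [div_le_one (by linarith)]; linarith
    · rw [lazyWalk_eq_zero α hne hadj]; norm_num
  have hfinx : (Function.support (lazyWalk G α x)).Finite :=
    (((G.neighborSet x).toFinite).insert x).subset (lazyWalk_support α x)
  have hfiny : (Function.support (lazyWalk G α y)).Finite :=
    (((G.neighborSet y).toFinite).insert y).subset (lazyWalk_support α y)
  refine ⟨?_, ?_, ?_, ?_⟩
  · apply Set.Finite.subset (hfinx.prod hfiny)
    intro p hp
    simp only [Function.mem_support] at hp
    exact ⟨left_ne_zero_of_mul hp, right_ne_zero_of_mul hp⟩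
  · intro u v
    dsimp only
    refine ⟨mul_nonneg (hb x u).1 (hb y v).1, ?_⟩
    nlinarith [(hb x u).1, (hb x u).2, (hb y v).1, (hb y v).2]
  · intro u
    dsimp only
    rw [← mul_finsum _ _, finsum_lazyWalk α hy, mul_one]
  · intro v
    dsimp only
    rw [← finsum_mul _ _, finsum_lazyWalk α hx, one_mul]

lemma coupling_dual (G : SimpleGraph V) {m₁ m₂ : V → ℝ} {A : V → V → ℝ}
    (hA : IsCoupling m₁ m₂ A) {f : V → ℝ}
    (hf : ∀ u v, f u - f v ≤ (G.dist u v : ℝ)) :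
    (∑ᶠ u, f u * m₁ u) - (∑ᶠ v, f v * m₂ v)
      ≤ ∑ᶠ p : V × V, A p.1 p.2 * (G.dist p.1 p.2 : ℝ) := by
  classical
  obtain ⟨hfin, hbd, hrow, hcol⟩ := hA
  set F : Finset (V × V) := hfin.toFinset with hFdef
  set Fu : Finset V := F.image Prod.fst with hFudef
  set Fv : Finset V := F.image Prod.snd with hFvdef
  have hmemF : ∀ u v, A u v ≠ 0 → (u, v) ∈ F := by
    intro u v h
    rw [hFdef, Set.Finite.mem_toFinset]
    exact h
  have hFuu : ∀ u v, A u v ≠ 0 → u ∈ Fu := fun u v h =>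
    Finset.mem_image.mpr ⟨(u, v), hmemF u v h, rfl⟩
  have hFvv : ∀ u v, A u v ≠ 0 → v ∈ Fv := fun u v h =>
    Finset.mem_image.mpr ⟨(u, v), hmemF u v h, rfl⟩
  have hrowF : ∀ u, ∑ v ∈ Fv, A u v = m₁ u := by
    intro u
    rw [← hrow u]
    exact (finsum_eq_sum_of_support_subset _ (fun v hv => hFvv u v hv)).symm
  have hcolF : ∀ v, ∑ u ∈ Fu, A u v = m₂ v := by
    intro v
    rw [← hcol v]
    exact (finsum_eq_sum_of_support_subset _ (fun u hu => hFuu u v hu)).symm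
  have hE1 : ∑ᶠ u, f u * m₁ u = ∑ u ∈ Fu, f u * m₁ u := by
    apply finsum_eq_sum_of_support_subset
    intro u hu
    have hm : m₁ u ≠ 0 := right_ne_zero_of_mul hu
    rw [← hrow u] at hm
    by_contra hnot
    apply hm
    apply finsum_eq_zero_of_forall_eq_zero
    intro v
    by_contra hAv
    exact hnot (hFuu u v hAv)
  have hE2 : ∑ᶠ v, f v * m₂ v = ∑ v ∈ Fv, f v * m₂ v := by
    apply finsum_eq_sum_of_support_subset
    intro v hv
    have hm : m₂ v ≠ 0 := right_ne_zero_of_mul hv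
    rw [← hcol v] at hm
    by_contra hnot
    apply hm
    apply finsum_eq_zero_of_forall_eq_zero
    intro u
    by_contra hAu
    exact hnot (hFvv u v hAu)
  have hcost : ∑ᶠ p : V × V, A p.1 p.2 * (G.dist p.1 p.2 : ℝ)
      = ∑ p ∈ Fu ×ˢ Fv, A p.1 p.2 * (G.dist p.1 p.2 : ℝ) := by
    apply finsum_eq_sum_of_support_subset
    intro p hp
    have hA0 : A p.1 p.2 ≠ 0 := left_ne_zero_of_mul hp
    exact Finset.mem_coe.mpr (Finset.mem_product.mpr ⟨hFuu _ _ hA0, hFvv _ _ hA0⟩)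
  rw [hE1, hE2, hcost]
  have step1 : ∑ p ∈ Fu ×ˢ Fv, A p.1 p.2 * (f p.1 - f p.2)
      ≤ ∑ p ∈ Fu ×ˢ Fv, A p.1 p.2 * (G.dist p.1 p.2 : ℝ) := by
    apply Finset.sum_le_sum
    intro p _
    exact mul_le_mul_of_nonneg_left (hf p.1 p.2) (hbd p.1 p.2).1
  refine le_trans (le_of_eq ?_) step1
  have e1 : ∑ p ∈ Fu ×ˢ Fv, A p.1 p.2 * (f p.1 - f p.2)
      = (∑ p ∈ Fu ×ˢ Fv, A p.1 p.2 * f p.1) - ∑ p ∈ Fu ×ˢ Fv, A p.1 p.2 * f p.2 := by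
    rw [← Finset.sum_sub_distrib]
    apply Finset.sum_congr rfl
    intros; ring
  have e2 : ∑ p ∈ Fu ×ˢ Fv, A p.1 p.2 * f p.1 = ∑ u ∈ Fu, f u * m₁ u := by
    rw [Finset.sum_product]
    apply Finset.sum_congr rfl
    intro u _
    dsimp only
    rw [← Finset.sum_mul, hrowF u, mul_comm]
  have e3 : ∑ p ∈ Fu ×ˢ Fv, A p.1 p.2 * f p.2 = ∑ v ∈ Fv, f v * m₂ v := by
    rw [Finset.sum_product, Finset.sum_comm]
    apply Finset.sum_congr rfl
    intro v _
    dsimp only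
    rw [← Finset.sum_mul, hcolF v, mul_comm]
  rw [e1, e2, e3]

end AuxLemmas


/-- Lemma 7 (key counting lemma): if `G` is a simple connected positively curved planar
graph, `xy` an edge with `deg x ≥ deg y`, `S ⊆ Γ(y)∖{x}` with `|S| = s` and
`|S ∩ Γ(x)| = k`, then
`|Γ(S) ∩ Γ(x)| > (s/deg y)·deg x − (k + 1 + |Γ(x,y)|) + |Γ(S) ∩ Γ(x,y)|`. -/
theorem neighborhood_expansion (G : SimpleGraph V) [G.LocallyFinite]
    (hconn : G.Connected) (hplanar : IsPlanar G) (hpos : PositivelyCurved G)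
    (x y : V) (hxy : G.Adj x y) (hdeg : G.degree y ≤ G.degree x)
    (S : Set V) (hS : S ⊆ G.neighborSet y \ {x}) (s k : ℕ)
    (hs : S.ncard = s) (hk : (S ∩ G.neighborSet x).ncard = k) :
    ((s : ℝ) / (G.degree y : ℝ)) * (G.degree x : ℝ)
        - ((k : ℝ) + 1 + ((G.neighborSet x ∩ G.neighborSet y).ncard : ℝ))
        + (((setNbhd G S) ∩ (G.neighborSet x ∩ G.neighborSet y)).ncard : ℝ)
      < (((setNbhd G S) ∩ G.neighborSet x).ncard : ℝ) := by
  classical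
  have hyx : G.Adj y x := hxy.symm
  have hSsub : S ⊆ G.neighborSet y := fun v hv => (hS hv).1
  have hSfin : S.Finite := (G.neighborSet y).toFinite.subset hSsub
  have hxS : x ∉ S := fun h => (hS h).2 rfl
  have hSy : ∀ v ∈ S, G.Adj y v := fun v hv => hSsub hv
  have hdegy : 0 < G.degree y := (G.degree_pos_iff_exists_adj y).mpr ⟨x, hyx⟩
  have hdegx : 0 < G.degree x := (G.degree_pos_iff_exists_adj x).mpr ⟨y, hxy⟩
  have hdyR : (0:ℝ) < (G.degree y : ℝ) := by exact_mod_cast hdegy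
  have hdxR : (0:ℝ) < (G.degree x : ℝ) := by exact_mod_cast hdegx
  rcases Nat.eq_zero_or_pos s with hs0 | hspos
  · -- trivial case S = ∅
    subst hs0
    have hSempty : S = ∅ := (Set.ncard_eq_zero hSfin).mp hs
    have hk0 : k = 0 := by rw [← hk, hSempty]; simp
    subst hk0
    have hnb : setNbhd G S = ∅ := by
      rw [hSempty]; ext v; simp [setNbhd]
    rw [hnb]
    have hc : (0:ℝ) ≤ ((G.neighborSet x ∩ G.neighborSet y).ncard : ℝ) := Nat.cast_nonneg _
    simp only [Set.empty_inter, Set.ncard_empty, Nat.cast_zero, zero_div, zero_mul,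
      add_zero, zero_add]
    linarith
  -- main case : S nonempty
  have hSne : S.Nonempty := Set.nonempty_of_ncard_ne_zero (by rw [hs]; omega)
  set S₀ : Finset V := hSfin.toFinset with hS₀def
  have hmemS₀ : ∀ v, v ∈ S₀ ↔ v ∈ S := fun v => hSfin.mem_toFinset
  have hS₀ne : S₀.Nonempty := by
    obtain ⟨v, hv⟩ := hSne
    exact ⟨v, (hmemS₀ v).mpr hv⟩
  -- distance facts
  have hdist0 : ∀ u v : V, G.dist u v = 0 ↔ u = v := fun u v => hconn.dist_eq_zero_iff
  have hdist1 : ∀ u v : V, G.Adj u v → G.dist u v = 1 :=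
    fun u v h => SimpleGraph.dist_eq_one_iff_adj.mpr h
  have hdist2 : ∀ u v : V, u ≠ v → ¬ G.Adj u v → 2 ≤ G.dist u v := by
    intro u v h1 h2
    have e0 : G.dist u v ≠ 0 := fun h => h1 ((hdist0 u v).mp h)
    have e1 : G.dist u v ≠ 1 := fun h => h2 (SimpleGraph.dist_eq_one_iff_adj.mp h)
    omega
  have hdistge1 : ∀ u v : V, u ≠ v → (1:ℝ) ≤ (G.dist u v : ℝ) := by
    intro u v h
    have : G.dist u v ≠ 0 := fun h0 => h ((hdist0 u v).mp h0)
    exact_mod_cast Nat.one_le_iff_ne_zero.mpr this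
  -- distance to S
  set dS : V → ℝ := fun v => S₀.inf' hS₀ne (fun u => (G.dist v u : ℝ)) with hdSdef
  have hdS_le : ∀ v u, u ∈ S → dS v ≤ (G.dist v u : ℝ) := by
    intro v u hu
    simp only [hdSdef]
    exact Finset.inf'_le _ ((hmemS₀ u).mpr hu)
  have hdS_ge : ∀ (v : V) (c : ℝ), (∀ u ∈ S, c ≤ (G.dist v u : ℝ)) → c ≤ dS v := by
    intro v c h
    simp only [hdSdef]
    exact Finset.le_inf' _ _ (fun u hu => h u ((hmemS₀ u).mp hu))
  have hdS_nonneg : ∀ v, 0 ≤ dS v := fun v => hdS_ge v 0 (fun u _ => Nat.cast_nonneg _)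
  have hdS_mem : ∀ v ∈ S, dS v = 0 := by
    intro v hv
    refine le_antisymm ?_ (hdS_nonneg v)
    have h := hdS_le v v hv
    rw [(hdist0 v v).mpr rfl] at h
    simpa using h
  have hdS_pos : ∀ v, v ∉ S → 1 ≤ dS v := by
    intro v hv
    apply hdS_ge
    intro u hu
    exact hdistge1 v u (fun h => hv (h ▸ hu))
  have hdS_nbhd : ∀ v, v ∈ setNbhd G S → dS v ≤ 1 := by
    intro v hv
    obtain ⟨w, hwS, hadj⟩ := hv
    have := hdS_le v w hwS
    rw [hdist1 v w hadj.symm] at this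
    simpa using this
  have hdS_far : ∀ v, v ∉ S → v ∉ setNbhd G S → 2 ≤ dS v := by
    intro v hv1 hv2
    apply hdS_ge
    intro u hu
    have hne : v ≠ u := fun h => hv1 (h ▸ hu)
    have hnadj : ¬ G.Adj v u := fun h => hv2 ⟨u, hu, h.symm⟩
    exact_mod_cast hdist2 v u hne hnadj
  -- the 1-Lipschitz potential function
  set f : V → ℝ := fun v => min ((G.dist v x : ℝ)) (min (dS v - 1) ((G.dist v y : ℝ) - 1))
    with hfdef
  have hfle1 : ∀ w, f w ≤ (G.dist w x : ℝ) := by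
    intro w; simp only [hfdef]; exact min_le_left _ _
  have hfle2 : ∀ w, f w ≤ dS w - 1 := by
    intro w; simp only [hfdef]; exact le_trans (min_le_right _ _) (min_le_left _ _)
  have hfle3 : ∀ w, f w ≤ (G.dist w y : ℝ) - 1 := by
    intro w; simp only [hfdef]; exact le_trans (min_le_right _ _) (min_le_right _ _)
  have hfge : ∀ (w : V) (c : ℝ), c ≤ (G.dist w x : ℝ) → c ≤ dS w - 1 →
      c ≤ (G.dist w y : ℝ) - 1 → c ≤ f w := by
    intro w c h1 h2 h3
    simp only [hfdef]
    exact le_min h1 (le_min h2 h3)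
  have hLip : ∀ u v : V, f u - f v ≤ (G.dist u v : ℝ) := by
    intro u v
    have htri : ∀ w : V, (G.dist u w : ℝ) ≤ (G.dist u v : ℝ) + (G.dist v w : ℝ) := by
      intro w; exact_mod_cast hconn.dist_triangle
    have htriS : dS u ≤ (G.dist u v : ℝ) + dS v := by
      obtain ⟨w, hw, hweq⟩ := Finset.exists_mem_eq_inf' hS₀ne (fun u => (G.dist v u : ℝ))
      have h1 : dS u ≤ (G.dist u w : ℝ) := hdS_le u w ((hmemS₀ w).mp hw)
      have h2 : dS v = (G.dist v w : ℝ) := by simp only [hdSdef]; exact hweq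
      calc dS u ≤ (G.dist u w : ℝ) := h1
        _ ≤ (G.dist u v : ℝ) + (G.dist v w : ℝ) := htri w
        _ = (G.dist u v : ℝ) + dS v := by rw [h2]
    have key : f u - (G.dist u v : ℝ) ≤ f v := by
      apply hfge
      · linarith [hfle1 u, htri x]
      · linarith [hfle2 u, htriS]
      · linarith [hfle3 u, htri y]
    linarith
  -- values of f
  have hfx : f x = 0 := by
    refine le_antisymm ?_ ?_
    · have := hfle3 x
      rw [hdist1 x y hxy] at this
      simpa using this
    · apply hfge
      · exact Nat.cast_nonneg _
      · linarith [hdS_pos x hxS]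
      · rw [hdist1 x y hxy]; norm_num
  have hfy : f y = -1 := by
    refine le_antisymm ?_ ?_
    · have := hfle3 y
      rw [(hdist0 y y).mpr rfl] at this
      simpa using this
    · apply hfge
      · have : (0:ℝ) ≤ (G.dist y x : ℝ) := Nat.cast_nonneg _
        linarith
      · linarith [hdS_nonneg y]
      · have : (0:ℝ) ≤ (G.dist y y : ℝ) := Nat.cast_nonneg _
        linarith
  have hfS : ∀ v ∈ S, f v = -1 := by
    intro v hv
    refine le_antisymm ?_ ?_
    · have := hfle2 v
      rw [hdS_mem v hv] at this
      simpa using this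
    · apply hfge
      · have : (0:ℝ) ≤ (G.dist v x : ℝ) := Nat.cast_nonneg _
        linarith
      · linarith [hdS_nonneg v]
      · have : (0:ℝ) ≤ (G.dist v y : ℝ) := Nat.cast_nonneg _
        linarith
  have hf0 : ∀ v, v ∉ S → v ≠ y → (v ∈ setNbhd G S ∨ G.Adj y v) → f v = 0 := by
    intro v hv1 hv2 hv3
    refine le_antisymm ?_ ?_
    · rcases hv3 with h | h
      · have := hfle2 v
        linarith [hdS_nbhd v h]
      · have := hfle3 v
        rw [hdist1 v y h.symm] at this
        simpa using this
    · apply hfge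
      · exact Nat.cast_nonneg _
      · linarith [hdS_pos v hv1]
      · linarith [hdistge1 v y hv2]
  have hf1 : ∀ v, v ∉ S → v ∉ setNbhd G S → v ≠ y → ¬ G.Adj y v → G.Adj x v → f v = 1 := by
    intro v h1 h2 h3 h4 h5
    have hd2 : (2:ℝ) ≤ (G.dist v y : ℝ) := by
      exact_mod_cast hdist2 v y h3 (fun h => h4 h.symm)
    refine le_antisymm ?_ ?_
    · have := hfle1 v
      rw [hdist1 v x h5.symm] at this
      exact_mod_cast this
    · apply hfge
      · rw [hdist1 v x h5.symm]; norm_num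
      · linarith [hdS_far v h1 h2]
      · linarith
    -- membership facts
  have hyNx : y ∈ G.neighborFinset x := by
    rw [SimpleGraph.mem_neighborFinset]; exact hxy
  have hyΓ : y ∈ setNbhd G S := by
    obtain ⟨u, hu⟩ := hSne
    exact ⟨u, hu, (hSy u hu).symm⟩
  have hyS : y ∉ S := fun h => G.irrefl (hSy y h)
  -- pointwise formula on the neighborhood of x
  have hpt : ∀ v ∈ G.neighborFinset x, f v
      = 1 - (if v ∈ setNbhd G S ∧ v ∉ S then (1:ℝ) else 0)
          - (if (G.Adj y v ∧ v ∉ S) ∧ v ∉ setNbhd G S then (1:ℝ) else 0)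
          - 2 * (if v ∈ S then (1:ℝ) else 0)
          - (if v = y then (1:ℝ) else 0) := by
    intro v hv
    have hadj : G.Adj x v := by rwa [SimpleGraph.mem_neighborFinset] at hv
    by_cases h1 : v = y
    · rw [h1]
      rw [hfy, if_pos ⟨hyΓ, hyS⟩, if_neg (fun h => G.irrefl h.1.1), if_neg hyS, if_pos rfl]
      ring
    by_cases h2 : v ∈ S
    · rw [hfS v h2, if_neg (fun h => h.2 h2), if_neg (fun h => h.1.2 h2), if_pos h2, if_neg h1]
      ring
    by_cases h3 : v ∈ setNbhd G S
    · rw [hf0 v h2 h1 (Or.inl h3), if_pos ⟨h3, h2⟩, if_neg (fun h => h.2 h3), if_neg h2,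
        if_neg h1]
      ring
    by_cases h4 : G.Adj y v
    · rw [hf0 v h2 h1 (Or.inr h4), if_neg (fun h => h3 h.1), if_pos ⟨⟨h4, h2⟩, h3⟩, if_neg h2,
        if_neg h1]
      ring
    · rw [hf1 v h2 h3 h1 h4 hadj, if_neg (fun h => h3 h.1), if_neg (fun h => h4 h.1.1),
        if_neg h2, if_neg h1]
      ring
  -- the sum over the neighborhood of x
  have hsumx : ∑ v ∈ G.neighborFinset x, f v
      = (G.degree x : ℝ)
        - (((G.neighborFinset x).filter (fun v => v ∈ setNbhd G S ∧ v ∉ S)).card : ℝ)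
        - (((G.neighborFinset x).filter
            (fun v => (G.Adj y v ∧ v ∉ S) ∧ v ∉ setNbhd G S)).card : ℝ)
        - 2 * (((G.neighborFinset x).filter (fun v => v ∈ S)).card : ℝ) - 1 := by
    rw [Finset.sum_congr rfl hpt]
    rw [Finset.sum_sub_distrib, Finset.sum_sub_distrib, Finset.sum_sub_distrib,
      Finset.sum_sub_distrib]
    rw [← Finset.mul_sum]
    rw [Finset.sum_boole, Finset.sum_boole, Finset.sum_boole]
    rw [Finset.sum_ite_eq' (G.neighborFinset x) y (fun _ => (1:ℝ)), if_pos hyNx]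
    rw [Finset.sum_const, nsmul_eq_mul, mul_one, SimpleGraph.card_neighborFinset_eq_degree]
  -- the sum over the neighborhood of y
  have hpty : ∀ v ∈ G.neighborFinset y, f v = -(if v ∈ S then (1:ℝ) else 0) := by
    intro v hv
    have hadj : G.Adj y v := by rwa [SimpleGraph.mem_neighborFinset] at hv
    have hvy : v ≠ y := fun h => G.irrefl (h ▸ hadj)
    by_cases h2 : v ∈ S
    · rw [hfS v h2, if_pos h2]
    · rw [hf0 v h2 hvy (Or.inr hadj), if_neg h2]; norm_num
  have hsumy : ∑ v ∈ G.neighborFinset y, f v = -(s:ℝ) := by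
    rw [Finset.sum_congr rfl hpty, Finset.sum_neg_distrib, Finset.sum_boole]
    have h1 : (G.neighborFinset y).filter (fun v => v ∈ S) = S₀ := by
      ext v
      simp only [Finset.mem_filter, SimpleGraph.mem_neighborFinset, hmemS₀]
      exact ⟨fun h => h.2, fun h => ⟨hSy v h, h⟩⟩
    have h2 : S₀.card = s := by
      rw [← hs, hS₀def]
      exact (Set.ncard_eq_toFinset_card _ hSfin).symm
    rw [h1, h2]
  -- counting identities
  have hsplit : ∀ (p q : V → Prop),
      ((G.neighborFinset x).filter (fun v => p v)).card
        = ((G.neighborFinset x).filter (fun v => p v ∧ q v)).card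
          + ((G.neighborFinset x).filter (fun v => p v ∧ ¬ q v)).card := by
    intro p q
    have h := Finset.card_filter_add_card_filter_not
      (s := (G.neighborFinset x).filter (fun v => p v)) (p := fun v => q v)
    simp only [Finset.filter_filter] at h
    exact h.symm
  have id_t : ((G.neighborFinset x).filter (fun v => v ∈ setNbhd G S)).card
      = ((G.neighborFinset x).filter (fun v => v ∈ setNbhd G S ∧ v ∈ S)).card
        + ((G.neighborFinset x).filter (fun v => v ∈ setNbhd G S ∧ v ∉ S)).card := by
    simpa only [Finset.filter_congr_decidable] using
      hsplit (fun v => v ∈ setNbhd G S) (fun v => v ∈ S)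
  have id_k : ((G.neighborFinset x).filter (fun v => v ∈ S)).card
      = ((G.neighborFinset x).filter (fun v => v ∈ S ∧ v ∈ setNbhd G S)).card
        + ((G.neighborFinset x).filter (fun v => v ∈ S ∧ v ∉ setNbhd G S)).card := by
    simpa only [Finset.filter_congr_decidable] using
      hsplit (fun v => v ∈ S) (fun v => v ∈ setNbhd G S)
  have ida : (G.neighborFinset x).filter (fun v => v ∈ S ∧ v ∈ setNbhd G S)
      = (G.neighborFinset x).filter (fun v => v ∈ setNbhd G S ∧ v ∈ S) := by
    ext v
    simp only [Finset.mem_filter]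
    tauto
  have id_c : ((G.neighborFinset x).filter (fun v => G.Adj y v)).card
      = ((G.neighborFinset x).filter (fun v => G.Adj y v ∧ v ∈ S)).card
        + ((G.neighborFinset x).filter (fun v => G.Adj y v ∧ v ∉ S)).card := by
    simpa only [Finset.filter_congr_decidable] using
      hsplit (fun v => G.Adj y v) (fun v => v ∈ S)
  have idb : (G.neighborFinset x).filter (fun v => G.Adj y v ∧ v ∈ S)
      = (G.neighborFinset x).filter (fun v => v ∈ S) := by
    ext v
    simp only [Finset.mem_filter]
    exact ⟨fun h => ⟨h.1, h.2.2⟩, fun h => ⟨h.1, hSy v h.2, h.2⟩⟩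
  have id_c2 : ((G.neighborFinset x).filter (fun v => G.Adj y v ∧ v ∉ S)).card
      = ((G.neighborFinset x).filter (fun v => (G.Adj y v ∧ v ∉ S) ∧ v ∈ setNbhd G S)).card
        + ((G.neighborFinset x).filter
            (fun v => (G.Adj y v ∧ v ∉ S) ∧ v ∉ setNbhd G S)).card := by
    have h := hsplit (fun v => G.Adj y v ∧ v ∉ S) (fun v => v ∈ setNbhd G S)
    convert h using 3 <;> congr!
  have id_t' : ((G.neighborFinset x).filter (fun v => G.Adj y v ∧ v ∈ setNbhd G S)).card
      = ((G.neighborFinset x).filter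
          (fun v => (G.Adj y v ∧ v ∈ setNbhd G S) ∧ v ∈ S)).card
        + ((G.neighborFinset x).filter
            (fun v => (G.Adj y v ∧ v ∈ setNbhd G S) ∧ v ∉ S)).card := by
    have h := hsplit (fun v => G.Adj y v ∧ v ∈ setNbhd G S) (fun v => v ∈ S)
    convert h using 3 <;> congr!
  have idc : (G.neighborFinset x).filter (fun v => (G.Adj y v ∧ v ∈ setNbhd G S) ∧ v ∈ S)
      = (G.neighborFinset x).filter (fun v => v ∈ setNbhd G S ∧ v ∈ S) := by
    ext v
    simp only [Finset.mem_filter]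
    exact ⟨fun h => ⟨h.1, h.2.1.2, h.2.2⟩, fun h => ⟨h.1, ⟨hSy v h.2.2, h.2.1⟩, h.2.2⟩⟩
  have idd : (G.neighborFinset x).filter (fun v => (G.Adj y v ∧ v ∈ setNbhd G S) ∧ v ∉ S)
      = (G.neighborFinset x).filter (fun v => (G.Adj y v ∧ v ∉ S) ∧ v ∈ setNbhd G S) := by
    ext v
    simp only [Finset.mem_filter]
    tauto
  -- bridges between set ncard and finset card
  have hbt : (setNbhd G S ∩ G.neighborSet x).ncard
      = ((G.neighborFinset x).filter (fun v => v ∈ setNbhd G S)).card := by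
    rw [← Set.ncard_coe_finset]
    congr 1
    ext v
    simp only [Finset.coe_filter, Set.mem_setOf_eq, Set.mem_inter_iff,
      SimpleGraph.mem_neighborFinset, SimpleGraph.mem_neighborSet]
    all_goals tauto
  have hbk : k = ((G.neighborFinset x).filter (fun v => v ∈ S)).card := by
    rw [← hk, ← Set.ncard_coe_finset]
    congr 1
    ext v
    simp only [Finset.coe_filter, Set.mem_setOf_eq, Set.mem_inter_iff,
      SimpleGraph.mem_neighborFinset, SimpleGraph.mem_neighborSet]
    all_goals tauto
  have hbc : (G.neighborSet x ∩ G.neighborSet y).ncard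
      = ((G.neighborFinset x).filter (fun v => G.Adj y v)).card := by
    rw [← Set.ncard_coe_finset]
    congr 1
    ext v
    simp only [Finset.coe_filter, Set.mem_setOf_eq, Set.mem_inter_iff,
      SimpleGraph.mem_neighborFinset, SimpleGraph.mem_neighborSet]
    all_goals tauto
  have hbt' : (setNbhd G S ∩ (G.neighborSet x ∩ G.neighborSet y)).ncard
      = ((G.neighborFinset x).filter (fun v => G.Adj y v ∧ v ∈ setNbhd G S)).card := by
    rw [← Set.ncard_coe_finset]
    congr 1
    ext v
    simp only [Finset.coe_filter, Set.mem_setOf_eq, Set.mem_inter_iff,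
      SimpleGraph.mem_neighborFinset, SimpleGraph.mem_neighborSet]
    all_goals tauto
  -- extract a suitable α from positive curvature
  obtain ⟨κ, hκpos, hκ⟩ := hpos hxy
  have hκ' : Tendsto (fun α : ℝ => alphaRicci G α x y / (1 - α))
      (nhdsWithin 1 (Set.Iio 1)) (nhds κ) := hκ
  have hev1 : ∀ᶠ α in nhdsWithin (1:ℝ) (Set.Iio 1), 0 < alphaRicci G α x y / (1 - α) :=
    hκ'.eventually (eventually_gt_nhds hκpos)
  have hev2 : ∀ᶠ α in nhdsWithin (1:ℝ) (Set.Iio 1), α ∈ Set.Ioo (1/2:ℝ) 1 :=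
    Filter.eventually_of_mem (Ioo_mem_nhdsLT_of_mem (by norm_num)) (fun z hz => hz)
  obtain ⟨α, hα1, hα2⟩ := (hev1.and hev2).exists
  have h1α : 0 < 1 - α := by
    have := hα2.2
    linarith
  have hα0 : (0:ℝ) ≤ α := by
    have := hα2.1
    linarith
  have hRpos : 0 < alphaRicci G α x y := by
    have h := mul_pos hα1 h1α
    rwa [div_mul_cancel₀ _ (ne_of_gt h1α)] at h
  have hdxy1 : (G.dist x y : ℝ) = 1 := by exact_mod_cast hdist1 x y hxy
  have hW : transportDist G (lazyWalk G α x) (lazyWalk G α y) < 1 := by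
    have h := hRpos
    simp only [alphaRicci, hdxy1, div_one] at h
    linarith
  -- extract a coupling of cost < 1
  have hcpl := isCoupling_prod (G := G) α x y hα0 (le_of_lt hα2.2) hdegx hdegy
  have hsetne : {w : ℝ | ∃ A : V → V → ℝ, IsCoupling (lazyWalk G α x) (lazyWalk G α y) A ∧
      w = ∑ᶠ p : V × V, A p.1 p.2 * (G.dist p.1 p.2 : ℝ)}.Nonempty :=
    ⟨_, ⟨_, hcpl, rfl⟩⟩
  have hW' : sInf {w : ℝ | ∃ A : V → V → ℝ,
      IsCoupling (lazyWalk G α x) (lazyWalk G α y) A ∧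
      w = ∑ᶠ p : V × V, A p.1 p.2 * (G.dist p.1 p.2 : ℝ)} < 1 := by
    simpa only [transportDist] using hW
  obtain ⟨w, hwmem, hwlt⟩ := exists_lt_of_csInf_lt hsetne hW'
  obtain ⟨A, hA, rfl⟩ := hwmem
  -- the Kantorovich duality bound
  have hdual := coupling_dual G hA hLip
  rw [finsum_mul_lazyWalk, finsum_mul_lazyWalk, hfx, hfy, hsumx, hsumy] at hdual
  have hlt := lt_of_le_of_lt hdual hwlt
  -- arithmetic wrap-up
  set T2 : ℝ :=
    (((G.neighborFinset x).filter (fun v => v ∈ setNbhd G S ∧ v ∉ S)).card : ℝ) with hT2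
  set M4 : ℝ := (((G.neighborFinset x).filter
      (fun v => (G.Adj y v ∧ v ∉ S) ∧ v ∉ setNbhd G S)).card : ℝ) with hM4
  set K0 : ℝ := (((G.neighborFinset x).filter (fun v => v ∈ S)).card : ℝ) with hK0
  have hstep1 : (((G.degree x : ℝ) - T2 - M4 - 2*K0 - 1) / (G.degree x : ℝ)
      + (s:ℝ)/(G.degree y : ℝ)) * (1 - α) + α < 1 := by
    calc (((G.degree x : ℝ) - T2 - M4 - 2*K0 - 1) / (G.degree x : ℝ)
          + (s:ℝ)/(G.degree y : ℝ)) * (1 - α) + α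
        = α * 0 + ((G.degree x : ℝ) - T2 - M4 - 2*K0 - 1) * ((1 - α) / (G.degree x : ℝ))
          - (α * (-1) + (-(s:ℝ)) * ((1 - α) / (G.degree y : ℝ))) := by
          field_simp
          ring
      _ < 1 := hlt
  have hstep2 : ((G.degree x : ℝ) - T2 - M4 - 2*K0 - 1) / (G.degree x : ℝ)
      + (s:ℝ)/(G.degree y : ℝ) < 1 := by
    have h2 : (((G.degree x : ℝ) - T2 - M4 - 2*K0 - 1) / (G.degree x : ℝ)
        + (s:ℝ)/(G.degree y : ℝ)) * (1 - α) < 1 * (1 - α) := by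
      rw [one_mul]; linarith
    exact lt_of_mul_lt_mul_right h2 (le_of_lt h1α)
  have hstep3 : ((G.degree x : ℝ) - T2 - M4 - 2*K0 - 1)
      + (s:ℝ)/(G.degree y : ℝ) * (G.degree x : ℝ) < (G.degree x : ℝ) := by
    have h3 := mul_lt_mul_of_pos_right hstep2 hdxR
    rw [add_mul, div_mul_cancel₀ _ (ne_of_gt hdxR), one_mul] at h3
    exact h3
  -- final combination
  rw [hbt, hbc, hbt']
  have e_t : ((((G.neighborFinset x).filter (fun v => v ∈ setNbhd G S)).card : ℕ) : ℝ)
      = (((G.neighborFinset x).filter (fun v => v ∈ setNbhd G S ∧ v ∈ S)).card : ℝ) + T2 := by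
    rw [hT2]
    exact_mod_cast congrArg (fun n : ℕ => (n : ℝ)) id_t
  have e_k : (k : ℝ)
      = (((G.neighborFinset x).filter (fun v => v ∈ setNbhd G S ∧ v ∈ S)).card : ℝ)
        + (((G.neighborFinset x).filter (fun v => v ∈ S ∧ v ∉ setNbhd G S)).card : ℝ) := by
    rw [hbk]
    rw [id_k, ida]
    push_cast
    ring
  have e_c : ((((G.neighborFinset x).filter (fun v => G.Adj y v)).card : ℕ) : ℝ)
      = K0
        + (((G.neighborFinset x).filter
            (fun v => (G.Adj y v ∧ v ∉ S) ∧ v ∈ setNbhd G S)).card : ℝ) + M4 := by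
    rw [hK0, hM4, id_c, idb, id_c2]
    push_cast
    ring
  have e_t' : ((((G.neighborFinset x).filter
        (fun v => G.Adj y v ∧ v ∈ setNbhd G S)).card : ℕ) : ℝ)
      = (((G.neighborFinset x).filter (fun v => v ∈ setNbhd G S ∧ v ∈ S)).card : ℝ)
        + (((G.neighborFinset x).filter
            (fun v => (G.Adj y v ∧ v ∉ S) ∧ v ∈ setNbhd G S)).card : ℝ) := by
    rw [id_t', idc, idd]
    push_cast
    ring
  have e_kK : (k : ℝ) = K0 := by rw [hbk, hK0]
  linarith [hstep3, e_t, e_k, e_c, e_t', e_kK]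
end

section
/- Let G be a simple connected positively curved (in the Lin–Lu–Yau sense) graph with maximum degree Δ. Then κ_LLY(x,y) ≥ 1/(Δ(Δ−1)) for every edge xy of G. -/
open Filter Set

variable {V : Type*}

set_option linter.unusedSectionVars false
set_option linter.unusedVariables false

section AuxLemmas
open Finset

section helpers
variable {V : Type*} [DecidableEq V]

lemma card_sigma_fiber (s : Finset V) (μ : V → ℕ) (u : V)
    (hu : u ∈ s) :
    (Finset.univ.filter fun p : Σ a : {a // a ∈ s}, Fin (μ a) => (p.1 : V) = u).card = μ u := by
  rw [Finset.card_filter]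
  rw [← Finset.univ_sigma_univ, Finset.sum_sigma]
  have h1 : ∀ a : {a // a ∈ s}, (∑ _i : Fin (μ a), if ((a : V) = u) then (1:ℕ) else 0)
      = if ((a : V) = u) then μ a else 0 := by
    intro a
    by_cases h : (a : V) = u <;> simp [h]
  simp only [h1]
  rw [show (∑ a : {a // a ∈ s}, if ((a:V) = u) then μ a else 0)
      = ∑ a ∈ s, (if a = u then μ a else 0) from Finset.sum_coe_sort s fun a => if a = u then μ a else 0]
  simp [Finset.sum_ite_eq' s u, hu]

lemma card_sigma_total (s : Finset V) (μ : V → ℕ) :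
    Fintype.card (Σ a : {a // a ∈ s}, Fin (μ a)) = ∑ u ∈ s, μ u := by
  rw [Fintype.card_sigma]
  simp only [Fintype.card_fin]
  exact Finset.sum_coe_sort s μ

end helpers

lemma perm_min {n : Type*} [Fintype n] [DecidableEq n]
    (c : n → n → ℝ) (M : Matrix n n ℝ) (hM : M ∈ doublyStochastic ℝ n) :
    ∃ σ : Equiv.Perm n, ∑ p, c p (σ p) ≤ ∑ p, ∑ q, M p q * c p q := by
  obtain ⟨w, hw0, hw1, hwM⟩ := exists_eq_sum_perm_of_mem_doublyStochastic hM
  obtain ⟨σ₀, -, hσ₀⟩ := Finset.exists_min_image (univ : Finset (Equiv.Perm n))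
    (fun σ => ∑ p, c p (σ p)) ⟨1, mem_univ 1⟩
  refine ⟨σ₀, ?_⟩
  have hPσ : ∀ (σ : Equiv.Perm n) (p : n), ∑ q, (σ.permMatrix ℝ) p q * c p q = c p (σ p) := by
    intro σ p
    rw [Finset.sum_eq_single (σ p)]
    · simp [Equiv.Perm.permMatrix, PEquiv.toMatrix_apply, Equiv.toPEquiv_apply]
    · intro q _ hq
      simp [Equiv.Perm.permMatrix, PEquiv.toMatrix_apply, Equiv.toPEquiv_apply, Ne.symm hq]
    · simp
  have key : ∑ p, ∑ q, M p q * c p q = ∑ σ : Equiv.Perm n, w σ * ∑ p, c p (σ p) := by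
    have hent : ∀ p q, M p q = ∑ σ : Equiv.Perm n, w σ * (σ.permMatrix ℝ) p q := by
      intro p q
      have h1 : M p q = (∑ σ : Equiv.Perm n, w σ • σ.permMatrix ℝ) p q := by rw [hwM]
      rw [h1]
      simp [Matrix.sum_apply]
    calc ∑ p, ∑ q, M p q * c p q
        = ∑ p, ∑ q, ∑ σ : Equiv.Perm n, w σ * ((σ.permMatrix ℝ) p q * c p q) := by
          refine Finset.sum_congr rfl fun p _ => Finset.sum_congr rfl fun q _ => ?_
          rw [hent, Finset.sum_mul]
          exact Finset.sum_congr rfl fun σ _ => by ring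
      _ = ∑ σ : Equiv.Perm n, ∑ p, ∑ q, w σ * ((σ.permMatrix ℝ) p q * c p q) := by
          have h2 : ∀ p : n, ∑ q, ∑ σ : Equiv.Perm n, w σ * ((σ.permMatrix ℝ) p q * c p q)
              = ∑ σ : Equiv.Perm n, ∑ q, w σ * ((σ.permMatrix ℝ) p q * c p q) :=
            fun p => Finset.sum_comm
          simp only [h2]
          exact Finset.sum_comm
      _ = ∑ σ : Equiv.Perm n, w σ * ∑ p, c p (σ p) := by
          refine Finset.sum_congr rfl fun σ _ => ?_
          rw [Finset.mul_sum]
          refine Finset.sum_congr rfl fun p _ => ?_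
          rw [← hPσ σ p, Finset.mul_sum]
  rw [key]
  calc ∑ p, c p (σ₀ p) = ∑ σ : Equiv.Perm n, w σ * ∑ p, c p (σ₀ p) := by
        rw [← Finset.sum_mul, hw1, one_mul]
    _ ≤ ∑ σ : Equiv.Perm n, w σ * ∑ p, c p (σ p) :=
        Finset.sum_le_sum fun σ _ => mul_le_mul_of_nonneg_left (hσ₀ σ (mem_univ σ)) (hw0 σ)

lemma exists_integral_coupling {V : Type*} (dV : V → V → ℕ) (s t : Finset V) (μ ν : V → ℕ)
    (hμ0 : ∀ u, u ∉ s → μ u = 0) (hν0 : ∀ v, v ∉ t → ν v = 0)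
    (hst : ∑ u ∈ s, μ u = ∑ v ∈ t, ν v) (hD : 0 < ∑ u ∈ s, μ u) :
    ∃ B : V → V → ℕ,
      (∀ u v, B u v ≠ 0 → u ∈ s ∧ v ∈ t) ∧
      (∀ u, ∑ v ∈ t, B u v = μ u) ∧
      (∀ v, ∑ u ∈ s, B u v = ν v) ∧
      (∀ A : V → V → ℝ, (∀ u v, 0 ≤ A u v) →
        (∀ u ∈ s, ∑ v ∈ t, A u v = (μ u : ℝ)) → (∀ v ∈ t, ∑ u ∈ s, A u v = (ν v : ℝ)) →
        ∑ u ∈ s, ∑ v ∈ t, (B u v : ℝ) * dV u v ≤ ∑ u ∈ s, ∑ v ∈ t, A u v * dV u v) := by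
  classical
  set n₁ := Σ a : {a // a ∈ s}, Fin (μ a) with hn₁
  set n₂ := Σ a : {a // a ∈ t}, Fin (ν a) with hn₂
  have hcard : Fintype.card n₂ = Fintype.card n₁ := by
    rw [card_sigma_total, card_sigma_total, hst]
  let e : n₂ ≃ n₁ := Fintype.equivOfCardEq hcard
  let r : n₁ → V := fun p => p.1
  let cf : n₁ → V := fun q => (e.symm q).1
  have hr_mem : ∀ p, r p ∈ s := fun p => p.1.2
  have hc_mem : ∀ q, cf q ∈ t := fun q => (e.symm q).1.2
  have hμpos : ∀ p : n₁, 0 < μ (r p) := fun p => p.2.pos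
  have hνpos : ∀ q : n₁, 0 < ν (cf q) := fun q => (e.symm q).2.pos
  have hcard_r : ∀ u ∈ s, (univ.filter fun p : n₁ => r p = u).card = μ u := by
    intro u hu; exact card_sigma_fiber s μ u hu
  have hcard_c : ∀ v ∈ t, (univ.filter fun q : n₁ => cf q = v).card = ν v := by
    intro v hv
    have himg : (univ.filter fun q : n₁ => cf q = v)
        = (univ.filter fun q' : n₂ => ((q'.1 : V)) = v).image e := by
      ext q
      simp only [Finset.mem_image, Finset.mem_filter, Finset.mem_univ, true_and]
      constructor
      · intro h; exact ⟨e.symm q, h, e.apply_symm_apply q⟩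
      · rintro ⟨q', hq', rfl⟩; simpa [cf] using hq'
    rw [himg, Finset.card_image_of_injective _ e.injective]
    exact card_sigma_fiber t ν v hv
  -- choose the optimal permutation
  obtain ⟨σ, -, hσmin⟩ := Finset.exists_min_image (univ : Finset (Equiv.Perm n₁))
    (fun σ => ∑ p, (dV (r p) (cf (σ p)) : ℝ)) ⟨1, mem_univ 1⟩
  set B : V → V → ℕ := fun u v => (univ.filter fun p : n₁ => r p = u ∧ cf (σ p) = v).card with hB
  have hsupp : ∀ u v, B u v ≠ 0 → u ∈ s ∧ v ∈ t := by
    intro u v h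
    obtain ⟨p, hp⟩ := Finset.card_pos.mp (Nat.pos_of_ne_zero h)
    rw [Finset.mem_filter] at hp
    exact ⟨hp.2.1 ▸ hr_mem p, hp.2.2 ▸ hc_mem (σ p)⟩
  have hrow : ∀ u, ∑ v ∈ t, B u v = μ u := by
    intro u
    by_cases hu : u ∈ s
    · have := Finset.card_eq_sum_card_fiberwise
        (f := fun p : n₁ => cf (σ p)) (s := univ.filter fun p : n₁ => r p = u) (t := t)
        (fun p _ => hc_mem (σ p))
      rw [hcard_r u hu] at this
      rw [this]
      refine Finset.sum_congr rfl fun v _ => ?_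
      rw [Finset.filter_filter]
    · rw [hμ0 u hu]
      refine Finset.sum_eq_zero fun v _ => ?_
      by_contra h
      exact hu (hsupp u v h).1
  have hcol : ∀ v, ∑ u ∈ s, B u v = ν v := by
    intro v
    by_cases hv : v ∈ t
    · have hbij : (univ.filter fun p : n₁ => cf (σ p) = v)
          = (univ.filter fun q : n₁ => cf q = v).image σ.symm := by
        ext p
        simp only [Finset.mem_image, Finset.mem_filter, Finset.mem_univ, true_and]
        constructor
        · intro h; exact ⟨σ p, h, σ.symm_apply_apply p⟩
        · rintro ⟨q, hq, rfl⟩; simpa using hq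
      have hcard' : (univ.filter fun p : n₁ => cf (σ p) = v).card = ν v := by
        rw [hbij, Finset.card_image_of_injective _ σ.symm.injective]
        exact hcard_c v hv
      have := Finset.card_eq_sum_card_fiberwise
        (f := fun p : n₁ => r p) (s := univ.filter fun p : n₁ => cf (σ p) = v) (t := s)
        (fun p _ => hr_mem p)
      rw [hcard'] at this
      rw [this]
      refine Finset.sum_congr rfl fun u _ => ?_
      rw [Finset.filter_filter]
      have heq : (univ.filter fun p : n₁ => cf (σ p) = v ∧ r p = u)
          = (univ.filter fun p : n₁ => r p = u ∧ cf (σ p) = v) := by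
        ext p; simp [and_comm]
      rw [heq]
    · rw [hν0 v hv]
      refine Finset.sum_eq_zero fun u _ => ?_
      by_contra h
      exact hv (hsupp u v h).2
  refine ⟨B, hsupp, hrow, hcol, ?_⟩
  intro A hA0 hArow hAcol
  -- vanishing facts
  have hAz_row : ∀ u ∈ s, μ u = 0 → ∀ v ∈ t, A u v = 0 := by
    intro u hu hμu v hv
    have h0 : ∑ v ∈ t, A u v = 0 := by rw [hArow u hu, hμu]; simp
    exact (Finset.sum_eq_zero_iff_of_nonneg (fun v _ => hA0 u v)).mp h0 v hv
  have hAz_col : ∀ v ∈ t, ν v = 0 → ∀ u ∈ s, A u v = 0 := by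
    intro v hv hνv u hu
    have h0 : ∑ u ∈ s, A u v = 0 := by rw [hAcol v hv, hνv]; simp
    exact (Finset.sum_eq_zero_iff_of_nonneg (fun u _ => hA0 u v)).mp h0 u hu
  -- fiberwise summation helpers
  have hsum_c : ∀ g : V → ℝ, ∑ q : n₁, g (cf q) = ∑ v ∈ t, (ν v : ℝ) * g v := by
    intro g
    rw [← Finset.sum_fiberwise_of_maps_to (g := cf) (t := t) (fun q _ => hc_mem q)
      (fun q => g (cf q))]
    refine Finset.sum_congr rfl fun v hv => ?_
    rw [Finset.sum_congr rfl (fun q hq => by rw [(Finset.mem_filter.mp hq).2] :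
      ∀ q ∈ univ.filter fun q : n₁ => cf q = v, g (cf q) = g v)]
    rw [Finset.sum_const, hcard_c v hv, nsmul_eq_mul]
  have hsum_r : ∀ g : V → ℝ, ∑ p : n₁, g (r p) = ∑ u ∈ s, (μ u : ℝ) * g u := by
    intro g
    rw [← Finset.sum_fiberwise_of_maps_to (g := r) (t := s) (fun p _ => hr_mem p)
      (fun p => g (r p))]
    refine Finset.sum_congr rfl fun u hu => ?_
    rw [Finset.sum_congr rfl (fun p hp => by rw [(Finset.mem_filter.mp hp).2] :
      ∀ p ∈ univ.filter fun p : n₁ => r p = u, g (r p) = g u)]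
    rw [Finset.sum_const, hcard_r u hu, nsmul_eq_mul]
  -- the doubly stochastic matrix associated with A
  have hMds : (fun p q : n₁ => A (r p) (cf q) / ((μ (r p) : ℝ) * (ν (cf q) : ℝ)))
      ∈ doublyStochastic ℝ n₁ := by
    refine mem_doublyStochastic_iff_sum.mpr ?_
    refine ⟨fun p q => div_nonneg (hA0 _ _) (by positivity), ?_, ?_⟩
    · intro p
      have hμp : ((μ (r p) : ℝ)) ≠ 0 := Nat.cast_ne_zero.mpr (hμpos p).ne'
      rw [hsum_c (fun v => A (r p) v / ((μ (r p) : ℝ) * (ν v : ℝ)))]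
      have h1 : ∑ v ∈ t, (ν v : ℝ) * (A (r p) v / ((μ (r p) : ℝ) * (ν v : ℝ)))
          = ∑ v ∈ t, A (r p) v / (μ (r p) : ℝ) := by
        refine Finset.sum_congr rfl fun v hv => ?_
        by_cases hνv : ν v = 0
        · simp [hνv, hAz_col v hv hνv (r p) (hr_mem p)]
        · have : ((ν v : ℝ)) ≠ 0 := Nat.cast_ne_zero.mpr hνv
          field_simp
      rw [h1, ← Finset.sum_div, hArow (r p) (hr_mem p), div_self hμp]
    · intro q
      have hνq : ((ν (cf q) : ℝ)) ≠ 0 := Nat.cast_ne_zero.mpr (hνpos q).ne'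
      rw [hsum_r (fun u => A u (cf q) / ((μ u : ℝ) * (ν (cf q) : ℝ)))]
      have h1 : ∑ u ∈ s, (μ u : ℝ) * (A u (cf q) / ((μ u : ℝ) * (ν (cf q) : ℝ)))
          = ∑ u ∈ s, A u (cf q) / (ν (cf q) : ℝ) := by
        refine Finset.sum_congr rfl fun u hu => ?_
        by_cases hμu : μ u = 0
        · simp [hμu, hAz_row u hu hμu (cf q) (hc_mem q)]
        · have : ((μ u : ℝ)) ≠ 0 := Nat.cast_ne_zero.mpr hμu
          field_simp
      rw [h1, ← Finset.sum_div, hAcol (cf q) (hc_mem q), div_self hνq]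
  -- value of the relaxed objective
  have hLM : ∑ p : n₁, ∑ q : n₁,
        (A (r p) (cf q) / ((μ (r p) : ℝ) * (ν (cf q) : ℝ))) * (dV (r p) (cf q) : ℝ)
      = ∑ u ∈ s, ∑ v ∈ t, A u v * (dV u v : ℝ) := by
    calc ∑ p : n₁, ∑ q : n₁,
          (A (r p) (cf q) / ((μ (r p) : ℝ) * (ν (cf q) : ℝ))) * (dV (r p) (cf q) : ℝ)
        = ∑ p : n₁, ∑ v ∈ t, (ν v : ℝ) *
            (A (r p) v / ((μ (r p) : ℝ) * (ν v : ℝ)) * (dV (r p) v : ℝ)) :=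
          Finset.sum_congr rfl fun p _ =>
            hsum_c (fun v => A (r p) v / ((μ (r p) : ℝ) * (ν v : ℝ)) * (dV (r p) v : ℝ))
      _ = ∑ u ∈ s, (μ u : ℝ) * ∑ v ∈ t, (ν v : ℝ) *
            (A u v / ((μ u : ℝ) * (ν v : ℝ)) * (dV u v : ℝ)) :=
          hsum_r (fun u => ∑ v ∈ t, (ν v : ℝ) *
            (A u v / ((μ u : ℝ) * (ν v : ℝ)) * (dV u v : ℝ)))
      _ = ∑ u ∈ s, ∑ v ∈ t, A u v * (dV u v : ℝ) := by
          refine Finset.sum_congr rfl fun u hu => ?_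
          rw [Finset.mul_sum]
          refine Finset.sum_congr rfl fun v hv => ?_
          by_cases hμu : μ u = 0
          · simp [hμu, hAz_row u hu hμu v hv]
          · by_cases hνv : ν v = 0
            · simp [hνv, hAz_col v hv hνv u hu]
            · have h2 : ((μ u : ℝ)) ≠ 0 := Nat.cast_ne_zero.mpr hμu
              have h3 : ((ν v : ℝ)) ≠ 0 := Nat.cast_ne_zero.mpr hνv
              field_simp
  -- cost of B equals the cost of σ
  have hBcost : ∑ u ∈ s, ∑ v ∈ t, (B u v : ℝ) * (dV u v : ℝ)
      = ∑ p : n₁, (dV (r p) (cf (σ p)) : ℝ) := by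
    rw [← Finset.sum_fiberwise_of_maps_to (g := fun p : n₁ => (r p, cf (σ p))) (t := s ×ˢ t)
      (fun p _ => Finset.mem_product.mpr ⟨hr_mem p, hc_mem (σ p)⟩)
      (fun p => (dV (r p) (cf (σ p)) : ℝ))]
    rw [Finset.sum_product]
    refine Finset.sum_congr rfl fun u _ => Finset.sum_congr rfl fun v _ => ?_
    have hfil : (univ.filter fun p : n₁ => (r p, cf (σ p)) = (u, v))
        = univ.filter fun p : n₁ => r p = u ∧ cf (σ p) = v := by
      ext p; simp [Prod.ext_iff]
    rw [hfil]
    rw [Finset.sum_congr rfl (fun p hp => by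
      rw [(Finset.mem_filter.mp hp).2.1, (Finset.mem_filter.mp hp).2.2] :
      ∀ p ∈ univ.filter fun p : n₁ => r p = u ∧ cf (σ p) = v,
        (dV (r p) (cf (σ p)) : ℝ) = (dV u v : ℝ))]
    rw [Finset.sum_const, nsmul_eq_mul]
  -- conclude
  obtain ⟨σ', hσ'⟩ := perm_min (fun p q : n₁ => (dV (r p) (cf q) : ℝ))
    (fun p q : n₁ => A (r p) (cf q) / ((μ (r p) : ℝ) * (ν (cf q) : ℝ))) hMds
  calc ∑ u ∈ s, ∑ v ∈ t, (B u v : ℝ) * (dV u v : ℝ)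
      = ∑ p : n₁, (dV (r p) (cf (σ p)) : ℝ) := hBcost
    _ ≤ ∑ p : n₁, (dV (r p) (cf (σ' p)) : ℝ) := hσmin σ' (mem_univ σ')
    _ ≤ ∑ p : n₁, ∑ q : n₁,
          (A (r p) (cf q) / ((μ (r p) : ℝ) * (ν (cf q) : ℝ))) * (dV (r p) (cf q) : ℝ) := hσ'
    _ = ∑ u ∈ s, ∑ v ∈ t, A u v * (dV u v : ℝ) := hLM

section walk

variable [DecidableEq V] (G : SimpleGraph V) [G.LocallyFinite]

lemma lazyWalk_apply_self (α : ℝ) (x : V) : lazyWalk G α x x = α := by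
  simp [lazyWalk]

lemma lazyWalk_apply_adj {α : ℝ} {x u : V} (h : G.Adj x u) :
    lazyWalk G α x u = (1 - α) / (G.degree x : ℝ) := by
  have : u ≠ x := fun he => G.irrefl (he ▸ h)
  simp [lazyWalk, this, h]

lemma lazyWalk_apply_zero {α : ℝ} {x u : V} (h1 : u ≠ x) (h2 : ¬ G.Adj x u) :
    lazyWalk G α x u = 0 := by
  simp [lazyWalk, h1, h2]

lemma lazyWalk_support_s6 {α : ℝ} {x u : V} (h : lazyWalk G α x u ≠ 0) :
    u ∈ insert x (G.neighborFinset x) := by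
  by_contra hn
  simp only [Finset.mem_insert, SimpleGraph.mem_neighborFinset, not_or] at hn
  exact h (lazyWalk_apply_zero G hn.1 hn.2)

lemma lazyWalk_sum {α : ℝ} {x : V} (hdeg : 0 < G.degree x) :
    ∑ u ∈ insert x (G.neighborFinset x), lazyWalk G α x u = 1 := by
  have hx : x ∉ G.neighborFinset x := by simp
  rw [Finset.sum_insert hx, lazyWalk_apply_self]
  have h1 : ∀ u ∈ G.neighborFinset x, lazyWalk G α x u = (1 - α) / (G.degree x : ℝ) := by
    intro u hu
    exact lazyWalk_apply_adj G ((G.mem_neighborFinset x u).mp hu)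
  rw [Finset.sum_congr rfl h1, Finset.sum_const, SimpleGraph.card_neighborFinset_eq_degree,
    nsmul_eq_mul]
  have : (G.degree x : ℝ) ≠ 0 := Nat.cast_ne_zero.mpr hdeg.ne'
  field_simp
  ring

end walk

lemma transportDist_rat (G : SimpleGraph V) [G.LocallyFinite] {x y : V} (hxy : G.Adj x y)
    (D : ℕ) (hD : 0 < D) {α : ℝ} (μ ν : V → ℕ)
    (hμ : ∀ u, (μ u : ℝ) = D * lazyWalk G α x u) (hν : ∀ v, (ν v : ℝ) = D * lazyWalk G α y v) :
    ∃ k : ℕ, transportDist G (lazyWalk G α x) (lazyWalk G α y) = (k : ℝ) / D := by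
  classical
  set s := insert x (G.neighborFinset x) with hs
  set t := insert y (G.neighborFinset y) with ht
  have hDR : (D : ℝ) ≠ 0 := Nat.cast_ne_zero.mpr hD.ne'
  have hdx : 0 < G.degree x := by
    rw [← SimpleGraph.card_neighborFinset_eq_degree]
    exact Finset.card_pos.mpr ⟨y, (G.mem_neighborFinset x y).mpr hxy⟩
  have hdy : 0 < G.degree y := by
    rw [← SimpleGraph.card_neighborFinset_eq_degree]
    exact Finset.card_pos.mpr ⟨x, (G.mem_neighborFinset y x).mpr hxy.symm⟩
  have hμ0 : ∀ u, u ∉ s → μ u = 0 := by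
    intro u hu
    have : lazyWalk G α x u = 0 := by
      by_contra h
      exact hu (lazyWalk_support_s6 G h)
    have h2 : (μ u : ℝ) = 0 := by rw [hμ u, this, mul_zero]
    exact_mod_cast h2
  have hν0 : ∀ v, v ∉ t → ν v = 0 := by
    intro v hv
    have : lazyWalk G α y v = 0 := by
      by_contra h
      exact hv (lazyWalk_support_s6 G h)
    have h2 : (ν v : ℝ) = 0 := by rw [hν v, this, mul_zero]
    exact_mod_cast h2
  have hμsum : ∑ u ∈ s, μ u = D := by
    have : ((∑ u ∈ s, μ u : ℕ) : ℝ) = (D : ℝ) := by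
      push_cast
      rw [Finset.sum_congr rfl (fun u _ => hμ u), ← Finset.mul_sum, lazyWalk_sum G hdx, mul_one]
    exact_mod_cast this
  have hνsum : ∑ v ∈ t, ν v = D := by
    have : ((∑ v ∈ t, ν v : ℕ) : ℝ) = (D : ℝ) := by
      push_cast
      rw [Finset.sum_congr rfl (fun v _ => hν v), ← Finset.mul_sum, lazyWalk_sum G hdy, mul_one]
    exact_mod_cast this
  obtain ⟨B, hBsupp, hBrow, hBcol, hBopt⟩ := exists_integral_coupling
    (fun u v => G.dist u v) s t μ ν hμ0 hν0 (by rw [hμsum, hνsum]) (by rw [hμsum]; exact hD)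
  set k : ℕ := ∑ u ∈ s, ∑ v ∈ t, B u v * G.dist u v with hk
  refine ⟨k, ?_⟩
  -- the candidate optimal coupling
  set A₀ : V → V → ℝ := fun u v => (B u v : ℝ) / D with hA₀
  have hBle : ∀ u v, B u v ≤ D := by
    intro u v
    by_cases hv : v ∈ t
    · calc B u v ≤ ∑ v' ∈ t, B u v' := Finset.single_le_sum (fun _ _ => Nat.zero_le _) hv
        _ = μ u := hBrow u
        _ ≤ D := by
          by_cases hu : u ∈ s
          · rw [← hμsum]; exact Finset.single_le_sum (fun _ _ => Nat.zero_le _) hu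
          · rw [hμ0 u hu]; exact Nat.zero_le _
    · have : B u v = 0 := by
        by_contra h
        exact hv (hBsupp u v h).2
      rw [this]; exact Nat.zero_le _
  have hA₀supp : ∀ u v, A₀ u v ≠ 0 → u ∈ s ∧ v ∈ t := by
    intro u v h
    refine hBsupp u v fun h0 => h ?_
    rw [hA₀]; simp [h0]
  have hA₀coup : IsCoupling (lazyWalk G α x) (lazyWalk G α y) A₀ := by
    refine ⟨?_, ?_, ?_, ?_⟩
    · refine Set.Finite.subset (s ×ˢ t).finite_toSet fun p hp => ?_
      obtain ⟨h1, h2⟩ := hA₀supp p.1 p.2 hp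
      simp [Finset.mem_coe, Finset.mem_product, h1, h2]
    · intro u v
      constructor
      · positivity
      · rw [hA₀]
        simp only
        rw [div_le_one (by exact_mod_cast hD)]
        exact_mod_cast hBle u v
    · intro u
      have hsub : Function.support (fun v => A₀ u v) ⊆ ↑t := fun v hv =>
        Finset.mem_coe.mpr (hA₀supp u v hv).2
      rw [finsum_eq_sum_of_support_subset _ hsub]
      have : ∑ v ∈ t, A₀ u v = (μ u : ℝ) / D := by
        rw [hA₀]
        simp only
        rw [← Finset.sum_div, ← Nat.cast_sum, hBrow u]
      rw [this, hμ u, mul_comm, mul_div_assoc, div_self hDR, mul_one]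
    · intro v
      have hsub : Function.support (fun u => A₀ u v) ⊆ ↑s := fun u hu =>
        Finset.mem_coe.mpr (hA₀supp u v hu).1
      rw [finsum_eq_sum_of_support_subset _ hsub]
      have : ∑ u ∈ s, A₀ u v = (ν v : ℝ) / D := by
        rw [hA₀]
        simp only
        rw [← Finset.sum_div, ← Nat.cast_sum, hBcol v]
      rw [this, hν v, mul_comm, mul_div_assoc, div_self hDR, mul_one]
  have hA₀cost : ∑ᶠ p : V × V, A₀ p.1 p.2 * (G.dist p.1 p.2 : ℝ) = (k : ℝ) / D := by
    have hsub : Function.support (fun p : V × V => A₀ p.1 p.2 * (G.dist p.1 p.2 : ℝ))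
        ⊆ ↑(s ×ˢ t) := by
      intro p hp
      rw [Function.mem_support] at hp
      have h1 : A₀ p.1 p.2 ≠ 0 := fun h => hp (by rw [h, zero_mul])
      obtain ⟨ha, hb⟩ := hA₀supp p.1 p.2 h1
      simp [Finset.mem_coe, Finset.mem_product, ha, hb]
    rw [finsum_eq_sum_of_support_subset _ hsub, Finset.sum_product]
    rw [hk]
    push_cast
    rw [Finset.sum_div]
    refine Finset.sum_congr rfl fun u _ => ?_
    rw [Finset.sum_div]
    refine Finset.sum_congr rfl fun v _ => ?_
    rw [hA₀]
    simp only
    ring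
  -- lower bound for arbitrary couplings
  have hlb : ∀ w ∈ {w : ℝ | ∃ A : V → V → ℝ, IsCoupling (lazyWalk G α x) (lazyWalk G α y) A ∧
      w = ∑ᶠ p : V × V, A p.1 p.2 * (G.dist p.1 p.2 : ℝ)}, (k : ℝ) / D ≤ w := by
    rintro w ⟨A, ⟨hfin, hbd, hrow, hcol⟩, rfl⟩
    have hfinrow : ∀ u, (Function.support fun v => A u v).Finite := by
      intro u
      have : (Function.support fun v => A u v) ⊆ Prod.mk u ⁻¹'
          (Function.support fun p : V × V => A p.1 p.2) := fun v hv => hv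
      exact Set.Finite.subset (Set.Finite.preimage (Prod.mk_right_injective u).injOn hfin) this
    have hfincol : ∀ v, (Function.support fun u => A u v).Finite := by
      intro v
      have : (Function.support fun u => A u v) ⊆ (fun u => (u, v)) ⁻¹'
          (Function.support fun p : V × V => A p.1 p.2) := fun u hu => hu
      exact Set.Finite.subset (Set.Finite.preimage (Prod.mk_left_injective v).injOn hfin) this
    have hAsupp : ∀ u v, A u v ≠ 0 → u ∈ s ∧ v ∈ t := by
      intro u v h
      have hpos : 0 < A u v := lt_of_le_of_ne (hbd u v).1 (Ne.symm h)
      constructor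
      · have : A u v ≤ lazyWalk G α x u := by
          rw [← hrow u]
          exact single_le_finsum v (hfinrow u) (fun j => (hbd u j).1)
        exact lazyWalk_support_s6 G (ne_of_gt (lt_of_lt_of_le hpos this))
      · have : A u v ≤ lazyWalk G α y v := by
          rw [← hcol v]
          exact single_le_finsum u (hfincol v) (fun j => (hbd j v).1)
        exact lazyWalk_support_s6 G (ne_of_gt (lt_of_lt_of_le hpos this))
    have hrow' : ∀ u ∈ s, ∑ v ∈ t, (D : ℝ) * A u v = (μ u : ℝ) := by
      intro u _
      rw [← Finset.mul_sum]
      have hsub : Function.support (fun v => A u v) ⊆ ↑t := fun v hv =>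
        Finset.mem_coe.mpr (hAsupp u v hv).2
      rw [← finsum_eq_sum_of_support_subset _ hsub, hrow u, hμ u]
    have hcol' : ∀ v ∈ t, ∑ u ∈ s, (D : ℝ) * A u v = (ν v : ℝ) := by
      intro v _
      rw [← Finset.mul_sum]
      have hsub : Function.support (fun u => A u v) ⊆ ↑s := fun u hu =>
        Finset.mem_coe.mpr (hAsupp u v hu).1
      rw [← finsum_eq_sum_of_support_subset _ hsub, hcol v, hν v]
    have hopt := hBopt (fun u v => (D : ℝ) * A u v)
      (fun u v => mul_nonneg (Nat.cast_nonneg D) (hbd u v).1) hrow' hcol'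
    have hcostA : ∑ᶠ p : V × V, A p.1 p.2 * (G.dist p.1 p.2 : ℝ)
        = ∑ u ∈ s, ∑ v ∈ t, A u v * (G.dist u v : ℝ) := by
      have hsub : Function.support (fun p : V × V => A p.1 p.2 * (G.dist p.1 p.2 : ℝ))
          ⊆ ↑(s ×ˢ t) := by
        intro p hp
        rw [Function.mem_support] at hp
        have h1 : A p.1 p.2 ≠ 0 := fun h => hp (by rw [h, zero_mul])
        obtain ⟨ha, hb⟩ := hAsupp p.1 p.2 h1
        simp [Finset.mem_coe, Finset.mem_product, ha, hb]
      rw [finsum_eq_sum_of_support_subset _ hsub, Finset.sum_product]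
    rw [hcostA]
    rw [div_le_iff₀ (by exact_mod_cast hD)]
    have h2 : (∑ u ∈ s, ∑ v ∈ t, A u v * (G.dist u v : ℝ)) * D
        = ∑ u ∈ s, ∑ v ∈ t, ((D : ℝ) * A u v) * (G.dist u v : ℝ) := by
      rw [Finset.sum_mul]
      refine Finset.sum_congr rfl fun u _ => ?_
      rw [Finset.sum_mul]
      refine Finset.sum_congr rfl fun v _ => ?_
      ring
    rw [h2]
    calc (k : ℝ) = ∑ u ∈ s, ∑ v ∈ t, (B u v : ℝ) * ((G.dist u v : ℕ) : ℝ) := by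
          rw [hk]; push_cast; rfl
      _ ≤ _ := hopt
  -- conclude
  rw [transportDist]
  refine le_antisymm (csInf_le ⟨(k : ℝ) / D, hlb⟩ ⟨A₀, hA₀coup, hA₀cost.symm⟩)
    (le_csInf ⟨(k : ℝ) / D, A₀, hA₀coup, hA₀cost.symm⟩ hlb)

end AuxLemmas

/-- Lemma 8: a simple connected positively curved graph with maximum degree `Δ` has
Lin–Lu–Yau Ricci curvature at least `1/(Δ(Δ-1))` on every edge. -/
theorem curvature_lower_bound_max_degree (G : SimpleGraph V) [G.LocallyFinite]
    (hconn : G.Connected) (hpos : PositivelyCurved G)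
    (Δ : ℕ) (hub : ∀ u : V, G.degree u ≤ Δ) (hattained : ∃ u : V, G.degree u = Δ) :
    ∀ x y : V, G.Adj x y → ∀ κ : ℝ, HasLLYCurv G x y κ →
      1 / ((Δ : ℝ) * ((Δ : ℝ) - 1)) ≤ κ := by
  classical
  intro x y hxy κ hκ
  obtain ⟨κ', hκ'pos, hκ'⟩ := hpos hxy
  have huniq : κ = κ' := tendsto_nhds_unique hκ hκ'
  rw [huniq]
  set dx := G.degree x with hdx'
  set dy := G.degree y with hdy'
  have hdx : 0 < dx := by
    rw [hdx', ← SimpleGraph.card_neighborFinset_eq_degree]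
    exact Finset.card_pos.mpr ⟨y, (G.mem_neighborFinset x y).mpr hxy⟩
  have hdy : 0 < dy := by
    rw [hdy', ← SimpleGraph.card_neighborFinset_eq_degree]
    exact Finset.card_pos.mpr ⟨x, (G.mem_neighborFinset y x).mpr hxy.symm⟩
  set L := Nat.lcm dx dy with hL
  have hLpos : 0 < L := Nat.pos_of_ne_zero (Nat.lcm_ne_zero hdx.ne' hdy.ne')
  have hLR : (0:ℝ) < L := by exact_mod_cast hLpos
  have hdistxy : G.dist x y = 1 := SimpleGraph.dist_eq_one_iff_adj.mpr hxy
  -- the key integrality fact along the sequence αₙ = n/(n+1)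
  have key : ∀ n : ℕ, ∃ m : ℤ,
      alphaRicci G ((n : ℝ)/((n : ℝ)+1)) x y / (1 - (n : ℝ)/((n : ℝ)+1)) = (m : ℝ) / L := by
    intro n
    set α : ℝ := (n : ℝ)/((n : ℝ)+1) with hα
    have hn1 : ((n : ℝ) + 1) ≠ 0 := by positivity
    set D : ℕ := (n + 1) * L with hD'
    have hD : 0 < D := by positivity
    have hDR : ((D : ℝ)) = ((n:ℝ)+1) * L := by rw [hD']; push_cast; ring
    set μ : V → ℕ := fun u => if u = x then n * L else if G.Adj x u then L / dx else 0 with hμ'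
    set ν : V → ℕ := fun v => if v = y then n * L else if G.Adj y v then L / dy else 0 with hν'
    have hcastx : ((L / dx : ℕ) : ℝ) = (L : ℝ) / (dx : ℝ) :=
      Nat.cast_div (Nat.dvd_lcm_left dx dy) (Nat.cast_ne_zero.mpr hdx.ne')
    have hcasty : ((L / dy : ℕ) : ℝ) = (L : ℝ) / (dy : ℝ) :=
      Nat.cast_div (Nat.dvd_lcm_right dx dy) (Nat.cast_ne_zero.mpr hdy.ne')
    have hμeq : ∀ u, (μ u : ℝ) = D * lazyWalk G α x u := by
      intro u
      by_cases hu : u = x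
      · subst hu
        rw [hμ']
        simp only [if_pos rfl]
        rw [lazyWalk_apply_self, hDR, hα]
        push_cast
        field_simp
      · by_cases hadj : G.Adj x u
        · rw [hμ']
          simp only [if_neg hu, if_pos hadj]
          rw [lazyWalk_apply_adj G hadj, hDR, hα, hcastx, ← hdx']
          have hdxR : ((dx : ℝ)) ≠ 0 := Nat.cast_ne_zero.mpr hdx.ne'
          field_simp
          ring
        · rw [hμ']
          simp only [if_neg hu, if_neg hadj]
          rw [lazyWalk_apply_zero G hu hadj, mul_zero, Nat.cast_zero]
    have hνeq : ∀ v, (ν v : ℝ) = D * lazyWalk G α y v := by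
      intro v
      by_cases hv : v = y
      · subst hv
        rw [hν']
        simp only [if_pos rfl]
        rw [lazyWalk_apply_self, hDR, hα]
        push_cast
        field_simp
      · by_cases hadj : G.Adj y v
        · rw [hν']
          simp only [if_neg hv, if_pos hadj]
          rw [lazyWalk_apply_adj G hadj, hDR, hα, hcasty, ← hdy']
          have hdyR : ((dy : ℝ)) ≠ 0 := Nat.cast_ne_zero.mpr hdy.ne'
          field_simp
          ring
        · rw [hν']
          simp only [if_neg hv, if_neg hadj]
          rw [lazyWalk_apply_zero G hv hadj, mul_zero, Nat.cast_zero]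
    obtain ⟨k, hk⟩ := transportDist_rat G hxy D hD μ ν hμeq hνeq
    refine ⟨((n + 1) * L : ℕ) - (k : ℤ), ?_⟩
    rw [alphaRicci, hk, hdistxy]
    have h1α : 1 - α = 1 / ((n:ℝ)+1) := by
      rw [hα]; field_simp; ring
    rw [h1α, hDR]
    push_cast
    have hLne : (L:ℝ) ≠ 0 := hLR.ne'
    field_simp
  -- the sequence tends to 1 from below
  have htendα : Tendsto (fun n : ℕ => (n : ℝ)/((n : ℝ)+1)) atTop (nhdsWithin 1 (Set.Iio 1)) := by
    apply tendsto_nhdsWithin_of_tendsto_nhds_of_eventually_within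
    · have h0 := tendsto_one_div_add_atTop_nhds_zero_nat (𝕜 := ℝ)
      have h1 : Tendsto (fun n : ℕ => 1 - 1/((n:ℝ)+1)) atTop (nhds 1) := by
        simpa using h0.const_sub (1:ℝ)
      refine h1.congr fun n => ?_
      have hn1 : ((n : ℝ) + 1) ≠ 0 := by positivity
      field_simp
      ring
    · refine Eventually.of_forall fun n => ?_
      have hn1 : (0:ℝ) < (n : ℝ) + 1 := by positivity
      rw [Set.mem_Iio, div_lt_one hn1]
      linarith
  have htend : Tendsto (fun n : ℕ =>
      alphaRicci G ((n : ℝ)/((n : ℝ)+1)) x y / (1 - (n : ℝ)/((n : ℝ)+1))) atTop (nhds κ') :=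
    hκ'.comp htendα
  have hev : ∀ᶠ n : ℕ in atTop,
      1/(L:ℝ) ≤ alphaRicci G ((n : ℝ)/((n : ℝ)+1)) x y / (1 - (n : ℝ)/((n : ℝ)+1)) := by
    filter_upwards [htend.eventually (eventually_gt_nhds (half_lt_self hκ'pos))] with n hn
    obtain ⟨m, hm⟩ := key n
    rw [hm] at hn ⊢
    have hm0 : (0:ℝ) < (m : ℝ) / L := lt_trans (half_pos hκ'pos) hn
    have hmpos : (0:ℝ) < (m:ℝ) := by
      by_contra h
      push_neg at h
      exact absurd hm0 (not_lt.mpr (div_nonpos_of_nonpos_of_nonneg h hLR.le))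
    have hm1 : (1:ℝ) ≤ (m:ℝ) := by exact_mod_cast (by exact_mod_cast hmpos : (0:ℤ) < m)
    exact (div_le_div_iff_of_pos_right hLR).mpr hm1
  have hκL : 1/(L:ℝ) ≤ κ' := ge_of_tendsto htend hev
  -- compare 1/(Δ(Δ-1)) with 1/L
  have hdxΔ : dx ≤ Δ := hub x
  have hdyΔ : dy ≤ Δ := hub y
  by_cases hΔ : Δ ≤ 1
  · have hΔ1 : Δ = 1 := le_antisymm hΔ (hdxΔ.trans' hdx)
    rw [hΔ1]
    norm_num
    exact le_trans (by positivity) hκL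
  · push_neg at hΔ
    have hLle : L ≤ Δ * (Δ - 1) := by
      rcases eq_or_ne dx dy with he | hne
      · have : L = dx := by rw [hL, he, Nat.lcm_self]
        rw [this]
        calc dx ≤ Δ := hdxΔ
          _ ≤ Δ * (Δ - 1) := Nat.le_mul_of_pos_right Δ (by omega)
      · have hdvd : L ∣ dx * dy := Nat.lcm_dvd_mul dx dy
        have h1 : L ≤ dx * dy := Nat.le_of_dvd (by positivity) hdvd
        have h2 : dx * dy ≤ Δ * (Δ - 1) := by
          rcases lt_or_gt_of_ne hne with h | h
          · have hle : dx ≤ Δ - 1 := by omega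
            calc dx * dy ≤ (Δ - 1) * Δ := Nat.mul_le_mul hle hdyΔ
              _ = Δ * (Δ - 1) := Nat.mul_comm _ _
          · have hle : dy ≤ Δ - 1 := by omega
            exact Nat.mul_le_mul hdxΔ hle
        exact h1.trans h2
    have hcast : ((Δ : ℝ) * ((Δ : ℝ) - 1)) = ((Δ * (Δ - 1) : ℕ) : ℝ) := by
      push_cast [Nat.cast_sub (by omega : 1 ≤ Δ)]
      ring
    rw [hcast]
    have hpos' : (0:ℝ) < ((Δ * (Δ - 1) : ℕ) : ℝ) := by
      have : 0 < Δ * (Δ - 1) := by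
        have : 1 ≤ Δ - 1 := by omega
        positivity
      exact_mod_cast this
    calc 1 / ((Δ * (Δ - 1) : ℕ) : ℝ) ≤ 1 / (L : ℝ) := by
          apply one_div_le_one_div_of_le hLR
          exact_mod_cast hLle
      _ ≤ κ' := hκL
end
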